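/- Let D = (E, F) be a delta-matroid and e ∈ E with primal type t (no minimum feasible set contains e, but some feasible set of size r(D_min)+1 contains e). Then e has primal type u in D^{×|e}: no feasible set of D^{×|e} of size r(D_min) or r(D_min)+1 contains e, and r((D^{×|e})_min) = r(D_min). -/
import Mathlib


open Finset Polynomial

variable {α : Type*} [DecidableEq α]

/-- The twist of a collection of feasible sets with respect to `A`. -/
noncomputable def SS.twist (A : Finset α) (F : Finset (Finset α)) : Finset (Finset α) :=
  F.image (fun X => symmDiff A X)

/-- Loop complementation at a single element `e`. -/
noncomputable def SS.lc (e : α) (F : Finset (Finset α)) : Finset (Finset α) :=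
  symmDiff F ((F.filter (fun X => e ∉ X)).image (insert e))

/-- The two generating operations: twist `*` and loop complementation `×`. -/
inductive SS.Op | star | cross

/-- Apply a single operation at a single element. -/
noncomputable def SS.opElem : SS.Op → α → Finset (Finset α) → Finset (Finset α)
  | .star, e, F => SS.twist {e} F
  | .cross, e, F => SS.lc e F

/-- Apply a word in `{*, ×}` at a single element. -/
noncomputable def SS.wordElem (w : List SS.Op) (e : α) (F : Finset (Finset α)) : Finset (Finset α) :=
  w.foldl (fun F o => SS.opElem o e F) F

/-- Apply a word in `{*, ×}` elementwise on a subset `A`. -/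
noncomputable def SS.wordOn (w : List SS.Op) (A : Finset α) (F : Finset (Finset α)) : Finset (Finset α) :=
  A.toList.foldl (fun F e => SS.wordElem w e F) F

/-- Size of a largest feasible set. -/
noncomputable def SS.rmax (F : Finset (Finset α)) : ℕ := F.sup Finset.card

/-- Size of a smallest feasible set. -/
noncomputable def SS.rmin (F : Finset (Finset α)) : ℕ := sInf (Finset.card '' (F : Set (Finset α)))

/-- The width of a set system. -/
noncomputable def SS.width (F : Finset (Finset α)) : ℕ := SS.rmax F - SS.rmin F

/-- The minimum-cardinality feasible sets. -/
noncomputable def SS.Fmin (F : Finset (Finset α)) : Finset (Finset α) :=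
  F.filter (fun X => X.card = SS.rmin F)

/-- The maximum-cardinality feasible sets. -/
noncomputable def SS.Fmax (F : Finset (Finset α)) : Finset (Finset α) :=
  F.filter (fun X => X.card = SS.rmax F)

/-- The partial-`w` polynomial of a set system with ground set `E`. -/
noncomputable def SS.poly (w : List SS.Op) (E : Finset α) (F : Finset (Finset α)) :
    Polynomial ℤ :=
  ∑ A ∈ E.powerset, (Polynomial.X : Polynomial ℤ) ^ SS.width (SS.wordOn w A F)

/-- A proper set system satisfying the symmetric exchange axiom. -/
noncomputable def SS.IsDeltaMatroid (F : Finset (Finset α)) : Prop :=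
  F.Nonempty ∧ ∀ X ∈ F, ∀ Y ∈ F, ∀ u ∈ symmDiff X Y,
    ∃ v ∈ symmDiff X Y, symmDiff X {u, v} ∈ F

/-- Apply a sequence of single-element twists and loop complementations. -/
noncomputable def SS.seqApply : List (SS.Op × α) → Finset (Finset α) → Finset (Finset α)
  | [], F => F
  | (o, e) :: s, F => SS.seqApply s (SS.opElem o e F)

/-- A set system is vf-safe if every sequence of single-element twists and loop
complementations yields a delta-matroid. -/
noncomputable def SS.VfSafe (F : Finset (Finset α)) : Prop :=
  ∀ s : List (SS.Op × α), SS.IsDeltaMatroid (SS.seqApply s F)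

/-- The direct sum of two set systems. -/
noncomputable def SS.dsum (F F' : Finset (Finset α)) : Finset (Finset α) :=
  (F ×ˢ F').image (fun p => p.1 ∪ p.2)

open SS


lemma sd_two_mem {s : Finset α} {u v : α} (hu : u ∈ s) (hv : v ∈ s) :
    symmDiff s {u, v} = s \ {u, v} := by
  ext x; simp [Finset.mem_symmDiff]; aesop

lemma sd_two_swap {s : Finset α} {u v : α} (hu : u ∈ s) (hv : v ∉ s) (huv : u ≠ v) :
    symmDiff s {u, v} = insert v (s \ {u}) := by
  ext x; simp [Finset.mem_symmDiff]; aesop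

lemma sd_assoc' (B A s : Finset α) : symmDiff (symmDiff B s) A = symmDiff (symmDiff B A) s := by
  rw [symmDiff_assoc, symmDiff_comm s A, ← symmDiff_assoc]

lemma rmin_le {F : Finset (Finset α)} {X : Finset α} (hX : X ∈ F) : SS.rmin F ≤ X.card :=
  Nat.sInf_le ⟨X, by simpa using hX, rfl⟩

lemma exists_rmin {F : Finset (Finset α)} (hne : F.Nonempty) :
    ∃ A ∈ F, A.card = SS.rmin F := by
  have h : (Finset.card '' (F : Set (Finset α))).Nonempty := by
    obtain ⟨A, hA⟩ := hne; exact ⟨A.card, A, by simpa using hA, rfl⟩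
  obtain ⟨A, hA, hcard⟩ := Nat.sInf_mem h
  exact ⟨A, by simpa using hA, hcard⟩

/-- Sandwich lemma: every feasible set contains a minimum feasible set. -/
lemma sandwich {F : Finset (Finset α)} (hD : SS.IsDeltaMatroid F) :
    ∀ X ∈ F, ∃ A ∈ F, A.card = SS.rmin F ∧ A ⊆ X := by
  intro X hX
  obtain ⟨A, hA, hAc⟩ := exists_rmin hD.1
  suffices h : ∀ n (A : Finset α), A ∈ F → A.card = SS.rmin F → (symmDiff X A).card ≤ n →
      ∃ A' ∈ F, A'.card = SS.rmin F ∧ A' ⊆ X from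
    h (symmDiff X A).card A hA hAc le_rfl
  intro n
  induction n with
  | zero =>
    intro A hA hAc hc
    have : X = A := by
      rw [Nat.le_zero, Finset.card_eq_zero] at hc
      exact symmDiff_eq_bot.mp hc
    exact ⟨A, hA, hAc, this ▸ le_rfl⟩
  | succ n ih =>
    intro A hA hAc hc
    by_cases hsub : A ⊆ X
    · exact ⟨A, hA, hAc, hsub⟩
    · obtain ⟨u, hu, huX⟩ := Finset.not_subset.mp hsub
      have huS : u ∈ symmDiff A X := by simp [Finset.mem_symmDiff, hu, huX]
      obtain ⟨v, hv, hAv⟩ := hD.2 A hA X hX u huS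
      rw [Finset.mem_symmDiff] at hv
      rcases hv with ⟨hvA, hvX⟩ | ⟨hvX, hvA⟩
      · exfalso
        rw [sd_two_mem hu hvA] at hAv
        have h1 : SS.rmin F ≤ (A \ {u, v}).card := rmin_le hAv
        have h2 : (A \ {u, v}).card < A.card :=
          Finset.card_lt_card ⟨Finset.sdiff_subset, fun hss => by
            simpa using hss hu⟩
        omega
      · have huv : u ≠ v := fun h => hvA (h ▸ hu)
        rw [sd_two_swap hu hvA huv] at hAv
        have hAc' : (insert v (A \ {u})).card = SS.rmin F := by
          rw [Finset.card_insert_of_notMem (by simp [hvA]),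
            Finset.card_sdiff_of_subset (by simpa using hu), Finset.card_singleton]
          have : 1 ≤ A.card := Finset.card_pos.mpr ⟨u, hu⟩
          omega
        apply ih _ hAv hAc'
        have heq : symmDiff X (insert v (A \ {u})) = (symmDiff X A) \ {u, v} := by
          ext x; simp [Finset.mem_symmDiff]
          constructor
          · rintro (⟨h1, h2⟩ | ⟨h1, h2⟩) <;> aesop
          · rintro ⟨(⟨h1, h2⟩ | ⟨h1, h2⟩), h3⟩ <;> aesop
        rw [heq]
        have : (symmDiff X A \ {u, v}).card < (symmDiff X A).card :=
          Finset.card_lt_card ⟨Finset.sdiff_subset, fun hss => by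
            have : u ∈ symmDiff X A := by simp [Finset.mem_symmDiff, hu, huX]
            simpa using hss this⟩
        omega

/-- If `e` has primal type t, then `insert e A ∈ F` for every minimum feasible set `A`. -/
lemma ribbon {F : Finset (Finset α)} (hD : SS.IsDeltaMatroid F) {e : α}
    (ht1 : ∀ A ∈ SS.Fmin F, e ∉ A)
    (ht2 : ∃ B ∈ F, B.card = SS.rmin F + 1 ∧ e ∈ B) :
    ∀ A ∈ F, A.card = SS.rmin F → insert e A ∈ F := by
  intro A hA hAc
  obtain ⟨B, hB, hBc, heB⟩ := ht2
  suffices h : ∀ n (B : Finset α), B ∈ F → B.card = SS.rmin F + 1 → e ∈ B →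
      (symmDiff B A).card ≤ n → insert e A ∈ F from
    h (symmDiff B A).card B hB hBc heB le_rfl
  have heA : e ∉ A := ht1 A (by simp [SS.Fmin, hA, hAc])
  intro n
  induction n with
  | zero =>
    intro B hB hBc heB hc
    exfalso
    have : B = A := by
      rw [Nat.le_zero, Finset.card_eq_zero] at hc
      exact symmDiff_eq_bot.mp hc
    rw [this] at hBc
    omega
  | succ n ih =>
    intro B hB hBc heB hc
    by_cases hBA : B = insert e A
    · exact hBA ▸ hB
    · -- B contains a minimum feasible set A₀ with B = insert e A₀
      obtain ⟨A₀, hA₀, hA₀c, hA₀B⟩ := sandwich hD B hB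
      have heA₀ : e ∉ A₀ := ht1 A₀ (by simp [SS.Fmin, hA₀, hA₀c])
      have hBeq : B = insert e A₀ := by
        apply (Finset.eq_of_subset_of_card_le _ _).symm
        · exact Finset.insert_subset heB hA₀B
        · rw [Finset.card_insert_of_notMem heA₀]; omega
      have hA₀A : A₀ ≠ A := fun h => hBA (hBeq.trans (by rw [h]))
      have : ¬ A₀ ⊆ A := fun hsub => hA₀A (Finset.eq_of_subset_of_card_le hsub (by omega))
      obtain ⟨u, hu, huA⟩ := Finset.not_subset.mp this
      have hue : u ≠ e := fun h => heA₀ (h ▸ hu)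
      have huB : u ∈ B := hA₀B hu
      have huS : u ∈ symmDiff B A := by simp [Finset.mem_symmDiff, huB, huA]
      obtain ⟨v, hv, hBv⟩ := hD.2 B hB A hA u huS
      rw [Finset.mem_symmDiff] at hv
      rcases hv with ⟨hvB, hvA⟩ | ⟨hvA, hvB⟩
      · exfalso
        by_cases huv : v = u
        · subst huv
          have : symmDiff B {v, v} = B \ {v} := by
            simpa using sd_two_mem hvB hvB
          rw [this] at hBv
          have hcB : (B \ {v}).card = SS.rmin F := by
            rw [Finset.card_sdiff_of_subset (by simpa using hvB), Finset.card_singleton]; omega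
          have heBv : e ∈ B \ {v} := by
            simp only [Finset.mem_sdiff, Finset.mem_singleton]
            exact ⟨heB, fun h => hue h.symm⟩
          exact ht1 _ (by simp [SS.Fmin, hBv, hcB]) heBv
        · rw [sd_two_mem huB hvB] at hBv
          have h1 : SS.rmin F ≤ (B \ {u, v}).card := rmin_le hBv
          have huv' : u ∉ ({v} : Finset α) := by
            simp only [Finset.mem_singleton]; exact fun h => huv h.symm
          have hsubB : ({u, v} : Finset α) ⊆ B := by
            intro x hx; rcases Finset.mem_insert.mp hx with h | h
            · exact h ▸ huB
            · exact (Finset.mem_singleton.mp h) ▸ hvB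
          have h4 : ({u, v} : Finset α).card = 2 := by
            rw [Finset.card_insert_of_notMem huv', Finset.card_singleton]
          have h2 : (B \ {u, v}).card = B.card - 2 := by
            rw [Finset.card_sdiff_of_subset hsubB, h4]
          have h3 : ({u, v} : Finset α).card ≤ B.card := Finset.card_le_card hsubB
          omega
      · have huv : u ≠ v := fun h => hvB (h ▸ huB)
        have hve : v ≠ e := fun h => heA (h ▸ hvA)
        rw [sd_two_swap huB hvB huv] at hBv
        have hBc' : (insert v (B \ {u})).card = SS.rmin F + 1 := by
          rw [Finset.card_insert_of_notMem (by simp [hvB]),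
            Finset.card_sdiff_of_subset (by simpa using huB), Finset.card_singleton]
          omega
        have heB' : e ∈ insert v (B \ {u}) := by simp [heB, hue.symm]
        apply ih _ hBv hBc' heB'
        have heq : symmDiff (insert v (B \ {u})) A = (symmDiff B A) \ {u, v} := by
          ext x; simp [Finset.mem_symmDiff]
          constructor
          · rintro (⟨h1, h2⟩ | ⟨h1, h2⟩) <;> aesop
          · rintro ⟨(⟨h1, h2⟩ | ⟨h1, h2⟩), h3⟩ <;> aesop
        rw [heq]
        have : (symmDiff B A \ {u, v}).card < (symmDiff B A).card :=
          Finset.card_lt_card ⟨Finset.sdiff_subset, fun hss => by simpa using hss huS⟩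
        omega

theorem stmt13 (F : Finset (Finset α)) (hD : SS.IsDeltaMatroid F) (e : α)
    (ht1 : ∀ A ∈ SS.Fmin F, e ∉ A)
    (ht2 : ∃ B ∈ F, B.card = SS.rmin F + 1 ∧ e ∈ B) :
    SS.rmin (SS.lc e F) = SS.rmin F ∧
    ∀ B ∈ SS.lc e F, B.card ≤ SS.rmin F + 1 → e ∉ B := by
  obtain ⟨A, hA, hAc⟩ := exists_rmin hD.1
  have heA : e ∉ A := ht1 A (by simp [SS.Fmin, hA, hAc])
  set G := (F.filter (fun X => e ∉ X)).image (insert e) with hG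
  have hGmem : ∀ B : Finset α, B ∈ G ↔ ∃ X, X ∈ F ∧ e ∉ X ∧ insert e X = B := by
    intro B
    simp [hG, Finset.mem_image, Finset.mem_filter, and_assoc]
  have hlc : ∀ B : Finset α, B ∈ SS.lc e F ↔ (B ∈ F ∧ B ∉ G) ∨ (B ∈ G ∧ B ∉ F) := by
    intro B
    rw [SS.lc, ← hG, Finset.mem_symmDiff]
  have hAlc : A ∈ SS.lc e F := by
    rw [hlc]
    refine Or.inl ⟨hA, fun h => ?_⟩
    obtain ⟨X, _, _, hX⟩ := (hGmem A).mp h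
    exact heA (hX ▸ Finset.mem_insert_self e X)
  have hlow : ∀ B ∈ SS.lc e F, SS.rmin F ≤ B.card := by
    intro B hB
    rcases (hlc B).mp hB with ⟨hBF, _⟩ | ⟨hBG, _⟩
    · exact rmin_le hBF
    · obtain ⟨X, hXF, _, hX⟩ := (hGmem B).mp hBG
      calc SS.rmin F ≤ X.card := rmin_le hXF
        _ ≤ B.card := hX ▸ Finset.card_le_card (Finset.subset_insert e X)
  constructor
  · refine le_antisymm (Nat.sInf_le ⟨A, by simpa using hAlc, hAc⟩) ?_
    refine le_csInf ⟨A.card, A, by simpa using hAlc, rfl⟩ ?_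
    rintro b ⟨B, hB, rfl⟩
    exact hlow B (by simpa using hB)
  · intro B hB hcard heB
    rcases (hlc B).mp hB with ⟨hBF, hBG⟩ | ⟨hBG, hBF⟩
    · have h1 := rmin_le hBF
      rcases (by omega : B.card = SS.rmin F ∨ B.card = SS.rmin F + 1) with hc | hc
      · exact ht1 B (by simp [SS.Fmin, hBF, hc]) heB
      · obtain ⟨A₀, hA₀, hA₀c, hA₀B⟩ := sandwich hD B hBF
        have heA₀ : e ∉ A₀ := ht1 A₀ (by simp [SS.Fmin, hA₀, hA₀c])
        have hBeq : B = insert e A₀ := by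
          apply (Finset.eq_of_subset_of_card_le _ _).symm
          · exact Finset.insert_subset heB hA₀B
          · rw [Finset.card_insert_of_notMem heA₀]; omega
        exact hBG ((hGmem B).mpr ⟨A₀, hA₀, heA₀, hBeq.symm⟩)
    · obtain ⟨X, hXF, heX, hX⟩ := (hGmem B).mp hBG
      have hXc : B.card = X.card + 1 := by
        rw [← hX, Finset.card_insert_of_notMem heX]
      have h1 := rmin_le hXF
      have hXr : X.card = SS.rmin F := by omega
      exact hBF (hX ▸ ribbon hD ht1 ht2 X hXF hXr)
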